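/- Let k be a nonzero integer and define G'_k(y,z) = −k·cosh(k(1−z))·cosh(ky)/sinh(k) for 0 ≤ y ≤ z ≤ 1 and G'_k(y,z) = −k·cosh(kz)·cosh(k(1−y))/sinh(k) for 0 ≤ z < y ≤ 1. Then sup_{y∈[0,1]} ∫₀¹ |G'_k(y,z)| dz ≤ C for an absolute constant C independent of k. -/

import Mathlib

noncomputable def GreenG' (k : ℤ) (y z : ℝ) : ℝ :=
  if y ≤ z then -(k : ℝ) * Real.cosh ((k : ℝ) * (1 - z)) * Real.cosh ((k : ℝ) * y) / Real.sinh (k : ℝ)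
  else -(k : ℝ) * Real.cosh ((k : ℝ) * z) * Real.cosh ((k : ℝ) * (1 - y)) / Real.sinh (k : ℝ)

theorem greenPrime_L1_bound :
    ∃ C > (0 : ℝ), ∀ (k : ℤ), k ≠ 0 → ∀ y ∈ Set.Icc (0 : ℝ) 1,
      (∫ z in (0 : ℝ)..1, |GreenG' k y z|) ≤ C := by
  refine ⟨1, one_pos, ?_⟩
  intro k hk y hy
  obtain ⟨hy0, hy1⟩ := hy
  have hk' : (k : ℝ) ≠ 0 := Int.cast_ne_zero.mpr hk
  have hS : Real.sinh (k : ℝ) ≠ 0 := fun h => hk' (by simpa using Real.sinh_eq_zero.mp h)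
  have hks : 0 < (k : ℝ) / Real.sinh (k : ℝ) := by
    rcases hk'.lt_or_gt with h | h
    · have : Real.sinh (k : ℝ) < 0 := by
        have := Real.sinh_lt_sinh.mpr h
        simpa using this
      exact div_pos_of_neg_of_neg h this
    · exact div_pos h (by simpa using Real.sinh_lt_sinh.mpr h)
  -- nonpositivity of GreenG'
  have hGnonpos : ∀ z : ℝ, GreenG' k y z ≤ 0 := by
    intro z
    unfold GreenG'
    split
    · have e : -(k : ℝ) * Real.cosh ((k : ℝ) * (1 - z)) * Real.cosh ((k : ℝ) * y) / Real.sinh (k : ℝ)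
          = -(((k : ℝ) / Real.sinh (k : ℝ)) * (Real.cosh ((k : ℝ) * (1 - z)) * Real.cosh ((k : ℝ) * y))) := by
        ring
      rw [e]
      exact neg_nonpos.mpr (mul_nonneg hks.le (mul_nonneg (Real.cosh_pos _).le (Real.cosh_pos _).le))
    · have e : -(k : ℝ) * Real.cosh ((k : ℝ) * z) * Real.cosh ((k : ℝ) * (1 - y)) / Real.sinh (k : ℝ)
          = -(((k : ℝ) / Real.sinh (k : ℝ)) * (Real.cosh ((k : ℝ) * z) * Real.cosh ((k : ℝ) * (1 - y)))) := by
        ring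
      rw [e]
      exact neg_nonpos.mpr (mul_nonneg hks.le (mul_nonneg (Real.cosh_pos _).le (Real.cosh_pos _).le))
  -- continuity of GreenG' k y
  have hcont : Continuous (GreenG' k y) := by
    unfold GreenG'
    apply Continuous.if
    · intro a ha
      have : a ∈ frontier (Set.Ici y) := ha
      rw [frontier_Ici] at this
      rw [Set.mem_singleton_iff] at this
      subst this
      ring
    · fun_prop
    · fun_prop
  have hint1 : IntervalIntegrable (GreenG' k y) MeasureTheory.volume 0 y :=
    hcont.intervalIntegrable 0 y
  have hint2 : IntervalIntegrable (GreenG' k y) MeasureTheory.volume y 1 :=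
    hcont.intervalIntegrable y 1
  -- compute the two pieces
  have e1 : (∫ z in (0:ℝ)..y, GreenG' k y z)
      = -(Real.sinh ((k:ℝ)*y) * Real.cosh ((k:ℝ)*(1-y)) / Real.sinh (k:ℝ)) := by
    have hEq : Set.EqOn (GreenG' k y)
        (fun z => -(k : ℝ) * Real.cosh ((k : ℝ) * z) * Real.cosh ((k : ℝ) * (1 - y)) / Real.sinh (k : ℝ))
        (Set.uIcc (0:ℝ) y) := by
      intro z hz
      rw [Set.uIcc_of_le hy0] at hz
      unfold GreenG'
      split
      · have hzy : z = y := le_antisymm hz.2 (by assumption)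
        subst hzy; ring
      · rfl
    rw [intervalIntegral.integral_congr hEq]
    have hderiv : ∀ z ∈ Set.uIcc (0:ℝ) y,
        HasDerivAt (fun t => -(Real.sinh ((k:ℝ)*t) * Real.cosh ((k:ℝ)*(1-y)) / Real.sinh (k:ℝ)))
          (-(k : ℝ) * Real.cosh ((k : ℝ) * z) * Real.cosh ((k : ℝ) * (1 - y)) / Real.sinh (k : ℝ)) z := by
      intro z _
      have h1 : HasDerivAt (fun t : ℝ => (k:ℝ)*t) (k:ℝ) z := by
        simpa using (hasDerivAt_id z).const_mul (k:ℝ)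
      have h3 := ((h1.sinh.mul_const (Real.cosh ((k:ℝ)*(1-y)))).div_const (Real.sinh (k:ℝ))).neg
      refine h3.congr_deriv ?_
      ring
    rw [intervalIntegral.integral_eq_sub_of_hasDerivAt hderiv (Continuous.intervalIntegrable (by fun_prop) _ _)]
    simp
  have e2 : (∫ z in y..(1:ℝ), GreenG' k y z)
      = -(Real.sinh ((k:ℝ)*(1-y)) * Real.cosh ((k:ℝ)*y) / Real.sinh (k:ℝ)) := by
    have hEq : Set.EqOn (GreenG' k y)
        (fun z => -(k : ℝ) * Real.cosh ((k : ℝ) * (1 - z)) * Real.cosh ((k : ℝ) * y) / Real.sinh (k : ℝ))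
        (Set.uIcc y (1:ℝ)) := by
      intro z hz
      rw [Set.uIcc_of_le hy1] at hz
      unfold GreenG'
      split
      · rfl
      · have hzy : z = y := le_antisymm (le_of_not_ge (by assumption)) hz.1
        subst hzy; ring
    rw [intervalIntegral.integral_congr hEq]
    have hderiv : ∀ z ∈ Set.uIcc y (1:ℝ),
        HasDerivAt (fun t => Real.sinh ((k:ℝ)*(1-t)) * Real.cosh ((k:ℝ)*y) / Real.sinh (k:ℝ))
          (-(k : ℝ) * Real.cosh ((k : ℝ) * (1 - z)) * Real.cosh ((k : ℝ) * y) / Real.sinh (k : ℝ)) z := by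
      intro z _
      have h1 : HasDerivAt (fun t : ℝ => (k:ℝ)*(1-t)) (-(k:ℝ)) z := by
        have := ((hasDerivAt_id z).const_sub (1:ℝ)).const_mul (k:ℝ)
        simpa using this
      have h3 := (h1.sinh.mul_const (Real.cosh ((k:ℝ)*y))).div_const (Real.sinh (k:ℝ))
      refine h3.congr_deriv ?_
      ring
    rw [intervalIntegral.integral_eq_sub_of_hasDerivAt hderiv (Continuous.intervalIntegrable (by fun_prop) _ _)]
    simp
  have key : (∫ z in (0:ℝ)..1, GreenG' k y z) = -1 := by
    rw [← intervalIntegral.integral_add_adjacent_intervals hint1 hint2, e1, e2]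
    have hadd := Real.sinh_add ((k:ℝ)*y) ((k:ℝ)*(1-y))
    have hsum : (k:ℝ)*y + (k:ℝ)*(1-y) = (k:ℝ) := by ring
    rw [hsum] at hadd
    have hc : Real.sinh ((k:ℝ)*y) * Real.cosh ((k:ℝ)*(1-y)) + Real.sinh ((k:ℝ)*(1-y)) * Real.cosh ((k:ℝ)*y)
        = Real.sinh (k:ℝ) := by linear_combination -hadd
    have h2 : -(Real.sinh ((k:ℝ)*y) * Real.cosh ((k:ℝ)*(1-y)) / Real.sinh (k:ℝ))
        + -(Real.sinh ((k:ℝ)*(1-y)) * Real.cosh ((k:ℝ)*y) / Real.sinh (k:ℝ))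
        = -((Real.sinh ((k:ℝ)*y) * Real.cosh ((k:ℝ)*(1-y)) + Real.sinh ((k:ℝ)*(1-y)) * Real.cosh ((k:ℝ)*y)) / Real.sinh (k:ℝ)) := by
      ring
    rw [h2, hc, div_self hS]
  have habs : (∫ z in (0:ℝ)..1, |GreenG' k y z|) = -(∫ z in (0:ℝ)..1, GreenG' k y z) := by
    rw [← intervalIntegral.integral_neg]
    apply intervalIntegral.integral_congr
    intro z _
    exact abs_of_nonpos (hGnonpos z)
  rw [habs, key]
  norm_num
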